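/- Let ρ ∈ ℝ. If 0 < ρ < √2/2, then there exist α ∈ ℝ and σ² > 0 such that, setting w₁ = exp(α + σ²/2) and w₂ = exp(2α + σ²)·(exp(σ²) − 1), one has w₂/((1 + ρ)·w₁) + 1/(1 − ρ²) = 2. Conversely, if √2/2 ≤ ρ < 1, then no α ∈ ℝ and σ² > 0 satisfy this equation. -/

import Mathlib

/-- A SPINGARCH(1,1) process with `κ = 0` and variance-to-mean ratio 2 can have any
lag-one autocorrelation `ρ` with `0 < ρ < √2/2`, and no such process exists when
`√2/2 ≤ ρ < 1`. Here `w₁ = E[exp(Y)] = exp(α + σ²/2)` and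
`w₂ = Var(exp(Y)) = exp(2α + σ²)(exp(σ²) − 1)` for `Y` Gaussian`(α, σ²)`. -/
theorem spingarch_kappa_zero_ratio_two_autocorrelation (ρ : ℝ) :
    (0 < ρ ∧ ρ < Real.sqrt 2 / 2 →
      ∃ α σ2 : ℝ, 0 < σ2 ∧
        (Real.exp (2 * α + σ2) * (Real.exp σ2 - 1))
            / ((1 + ρ) * Real.exp (α + σ2 / 2)) + 1 / (1 - ρ ^ 2) = 2) ∧
    (Real.sqrt 2 / 2 ≤ ρ ∧ ρ < 1 →
      ¬ ∃ α σ2 : ℝ, 0 < σ2 ∧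
        (Real.exp (2 * α + σ2) * (Real.exp σ2 - 1))
            / ((1 + ρ) * Real.exp (α + σ2 / 2)) + 1 / (1 - ρ ^ 2) = 2) := by
  constructor
  · rintro ⟨hρ0, hρs⟩
    -- ρ² < 1/2
    have h2 : (0:ℝ) < Real.sqrt 2 := Real.sqrt_pos.mpr (by norm_num)
    have hsq : ρ ^ 2 < 1 / 2 := by
      nlinarith [Real.sq_sqrt (show (0:ℝ) ≤ 2 by norm_num), h2, hρs]
    have hρ1 : ρ < 1 := by nlinarith
    have h1ρ : (0:ℝ) < 1 - ρ ^ 2 := by nlinarith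
    have h1ρ' : (0:ℝ) < 1 + ρ := by linarith
    have hc : (0:ℝ) < (1 + ρ) * (2 - 1 / (1 - ρ ^ 2)) := by
      have : 1 / (1 - ρ ^ 2) < 2 := by
        rw [div_lt_iff₀ h1ρ]; nlinarith
      exact mul_pos h1ρ' (by linarith)
    have he1 : (0:ℝ) < Real.exp 1 - 1 := by
      have := Real.one_lt_exp_iff (x := (1:ℝ)) |>.mpr (by norm_num)
      linarith
    set t : ℝ := (1 + ρ) * (2 - 1 / (1 - ρ ^ 2)) / (Real.exp 1 - 1) with ht
    have htpos : 0 < t := div_pos hc he1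
    refine ⟨Real.log t - 1/2, 1, by norm_num, ?_⟩
    have hexp1 : Real.exp (Real.log t - 1/2 + 1/2) = t := by
      rw [show Real.log t - 1/2 + 1/2 = Real.log t by ring, Real.exp_log htpos]
    have hexp2 : Real.exp (2 * (Real.log t - 1/2) + 1) = t ^ 2 := by
      rw [show 2 * (Real.log t - 1/2) + 1 = Real.log t + Real.log t by ring,
        Real.exp_add, Real.exp_log htpos]; ring
    rw [hexp1, hexp2]
    have key : t ^ 2 * (Real.exp 1 - 1) / ((1 + ρ) * t) = 2 - 1 / (1 - ρ ^ 2) := by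
      rw [show t ^ 2 * (Real.exp 1 - 1) / ((1 + ρ) * t)
          = t * (Real.exp 1 - 1) / (1 + ρ) by
        field_simp]
      rw [ht, div_mul_cancel₀ _ he1.ne', mul_div_cancel_left₀ _ h1ρ'.ne']
    rw [key]
    ring
  · rintro ⟨hρs, hρ1⟩ ⟨α, σ2, hσ, heq⟩
    have h2 : (0:ℝ) < Real.sqrt 2 := Real.sqrt_pos.mpr (by norm_num)
    have hρ0 : 0 < ρ := lt_of_lt_of_le (by positivity) hρs
    have hsq : 1 / 2 ≤ ρ ^ 2 := by
      have : Real.sqrt 2 ≤ 2 * ρ := by linarith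
      nlinarith [Real.sq_sqrt (show (0:ℝ) ≤ 2 by norm_num)]
    have h1ρ : (0:ℝ) < 1 - ρ ^ 2 := by nlinarith
    have h1ρ' : (0:ℝ) < 1 + ρ := by linarith
    have hge : (2:ℝ) ≤ 1 / (1 - ρ ^ 2) := by
      rw [le_div_iff₀ h1ρ]; nlinarith
    have hpos : 0 < (Real.exp (2 * α + σ2) * (Real.exp σ2 - 1))
        / ((1 + ρ) * Real.exp (α + σ2 / 2)) := by
      have : (1:ℝ) < Real.exp σ2 := Real.one_lt_exp_iff.mpr hσ
      have h1 : 0 < Real.exp σ2 - 1 := by linarith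
      positivity
    linarith
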